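/- Let C₁ and C₂ be real symmetric positive semidefinite d × d matrices with the same null space (i.e., C₁x = 0 if and only if C₂x = 0) such that C₁ ⪯ C₂ in the Loewner order, and let P₁ and P₂ be Moore–Penrose pseudoinverses of C₁ and C₂ respectively. Then P₂ ⪯ P₁. -/

import Mathlib

open Matrix BigOperators

/-- `P` is a Moore–Penrose pseudoinverse of `M`. -/
def IsMoorePenrose {d : ℕ} (M P : Matrix (Fin d) (Fin d) ℝ) : Prop :=
  M * P * M = M ∧ P * M * P = P ∧ (M * P)ᵀ = M * P ∧ (P * M)ᵀ = P * M

lemma mp_unique {d : ℕ} (M P Q : Matrix (Fin d) (Fin d) ℝ)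
    (hP : IsMoorePenrose M P) (hQ : IsMoorePenrose M Q) : P = Q := by
  obtain ⟨hP1, hP2, hP3, hP4⟩ := hP
  obtain ⟨hQ1, hQ2, hQ3, hQ4⟩ := hQ
  have hMP : M * P = M * Q := by
    calc M * P = (M * P)ᵀ := hP3.symm
      _ = Pᵀ * Mᵀ := by rw [transpose_mul]
      _ = Pᵀ * (M * Q * M)ᵀ := by rw [hQ1]
      _ = Pᵀ * (Mᵀ * (M * Q)ᵀ) := by rw [transpose_mul]
      _ = (Pᵀ * Mᵀ) * (M * Q) := by rw [hQ3, mul_assoc]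
      _ = (M * P)ᵀ * (M * Q) := by rw [transpose_mul]
      _ = (M * P) * (M * Q) := by rw [hP3]
      _ = (M * P * M) * Q := by simp only [mul_assoc]
      _ = M * Q := by rw [hP1]
  have hPM : P * M = Q * M := by
    calc P * M = (P * M)ᵀ := hP4.symm
      _ = Mᵀ * Pᵀ := by rw [transpose_mul]
      _ = (M * (Q * M))ᵀ * Pᵀ := by rw [← mul_assoc, hQ1]
      _ = ((Q * M)ᵀ * Mᵀ) * Pᵀ := by rw [transpose_mul]
      _ = ((Q * M) * Mᵀ) * Pᵀ := by rw [hQ4]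
      _ = (Q * M) * (Mᵀ * Pᵀ) := by rw [mul_assoc]
      _ = (Q * M) * (P * M)ᵀ := by rw [transpose_mul]
      _ = (Q * M) * (P * M) := by rw [hP4]
      _ = Q * (M * P * M) := by simp only [mul_assoc]
      _ = Q * M := by rw [hP1]
  calc P = P * M * P := hP2.symm
    _ = P * (M * Q) := by rw [mul_assoc, hMP]
    _ = (P * M) * Q := by rw [mul_assoc]
    _ = (Q * M) * Q := by rw [hPM]
    _ = Q := hQ2

lemma mp_symm {d : ℕ} (M P : Matrix (Fin d) (Fin d) ℝ) (hM : Mᵀ = M)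
    (hP : IsMoorePenrose M P) : Pᵀ = P := by
  obtain ⟨h1, h2, h3, h4⟩ := hP
  refine mp_unique M Pᵀ P ⟨?_, ?_, ?_, ?_⟩ ⟨h1, h2, h3, h4⟩
  · calc M * Pᵀ * M = Mᵀ * Pᵀ * Mᵀ := by rw [hM]
      _ = (M * P * M)ᵀ := by simp [transpose_mul, mul_assoc]
      _ = M := by rw [h1, hM]
  · calc Pᵀ * M * Pᵀ = Pᵀ * Mᵀ * Pᵀ := by rw [hM]
      _ = (P * M * P)ᵀ := by simp [transpose_mul, mul_assoc]
      _ = Pᵀ := by rw [h2]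
  · calc (M * Pᵀ)ᵀ = P * Mᵀ := by simp [transpose_mul]
      _ = P * M := by rw [hM]
      _ = (P * M)ᵀ := h4.symm
      _ = Mᵀ * Pᵀ := by rw [transpose_mul]
      _ = M * Pᵀ := by rw [hM]
  · calc (Pᵀ * M)ᵀ = Mᵀ * P := by simp [transpose_mul]
      _ = M * P := by rw [hM]
      _ = (M * P)ᵀ := h3.symm
      _ = Pᵀ * Mᵀ := by rw [transpose_mul]
      _ = Pᵀ * M := by rw [hM]

lemma dot_symm {d : ℕ} (A : Matrix (Fin d) (Fin d) ℝ) (hA : Aᵀ = A)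
    (u w : Fin d → ℝ) : (A *ᵥ u) ⬝ᵥ w = u ⬝ᵥ (A *ᵥ w) := by
  rw [dotProduct_mulVec, ← mulVec_transpose, hA]

/-- If `C₁ ⪯ C₂` are PSD matrices with the same null space, then their Moore–Penrose
pseudoinverses satisfy `P₂ ⪯ P₁`. -/
theorem pseudoinverse_antitone (d : ℕ) (C₁ C₂ : Matrix (Fin d) (Fin d) ℝ)
    (hC₁ : C₁.PosSemidef) (hC₂ : C₂.PosSemidef)
    (hker : ∀ x : Fin d → ℝ, C₁.mulVec x = 0 ↔ C₂.mulVec x = 0)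
    (hle : (C₂ - C₁).PosSemidef)
    (P₁ P₂ : Matrix (Fin d) (Fin d) ℝ)
    (hP₁ : IsMoorePenrose C₁ P₁) (hP₂ : IsMoorePenrose C₂ P₂) :
    (P₁ - P₂).PosSemidef := by
  have hC₁s : C₁ᵀ = C₁ := hC₁.1.eq
  have hC₂s : C₂ᵀ = C₂ := hC₂.1.eq
  have hP₁s : P₁ᵀ = P₁ := mp_symm C₁ P₁ hC₁s hP₁
  have hP₂s : P₂ᵀ = P₂ := mp_symm C₂ P₂ hC₂s hP₂
  obtain ⟨h11, h12, h13, h14⟩ := hP₁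
  obtain ⟨h21, h22, h23, h24⟩ := hP₂
  refine PosSemidef.of_dotProduct_mulVec_nonneg ?_ ?_
  · show (P₁ - P₂)ᴴ = P₁ - P₂
    ext i j
    simp only [conjTranspose_apply, Matrix.sub_apply, star_trivial]
    conv_rhs => rw [← hP₁s, ← hP₂s]
    simp [transpose_apply]
  intro x
  simp only [star_trivial, sub_mulVec, dotProduct_sub, sub_nonneg]
  set y := P₂ *ᵥ x with hy
  set v := P₁ *ᵥ x with hv
  have hP₂r : P₂ = C₂ * (P₂ * P₂) := by
    calc P₂ = P₂ * C₂ * P₂ := h22.symm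
      _ = (P₂ * C₂)ᵀ * P₂ := by rw [h24]
      _ = C₂ᵀ * P₂ᵀ * P₂ := by rw [transpose_mul]
      _ = C₂ * (P₂ * P₂) := by rw [hC₂s, hP₂s, mul_assoc]
  have hC₁P₁ : C₁ * P₁ = P₁ * C₁ := by
    rw [← h13, transpose_mul, hP₁s, hC₁s]
  have hCCP : C₁ * C₁ * P₁ = C₁ := by
    rw [mul_assoc, hC₁P₁, ← mul_assoc, h11]
  set z := x - C₁ *ᵥ v with hz
  have hC₁z : C₁ *ᵥ z = 0 := by
    rw [hz, mulVec_sub, hv, mulVec_mulVec, mulVec_mulVec, hCCP, sub_self]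
  have hC₂z : C₂ *ᵥ z = 0 := (hker z).mp hC₁z
  have hzy : z ⬝ᵥ y = 0 := by
    rw [hy, hP₂r, ← mulVec_mulVec, ← dot_symm C₂ hC₂s, hC₂z, zero_dotProduct]
  have hs2 : x ⬝ᵥ (P₂ *ᵥ x) = y ⬝ᵥ (C₂ *ᵥ y) := by
    rw [hy, dot_symm P₂ hP₂s, mulVec_mulVec, mulVec_mulVec, h22]
  have hs1 : x ⬝ᵥ (P₁ *ᵥ x) = v ⬝ᵥ (C₁ *ᵥ v) := by
    rw [hv, dot_symm P₁ hP₁s, mulVec_mulVec, mulVec_mulVec, h12]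
  have hle' : y ⬝ᵥ (C₁ *ᵥ y) ≤ y ⬝ᵥ (C₂ *ᵥ y) := by
    have := hle.dotProduct_mulVec_nonneg y
    simp only [star_trivial, sub_mulVec, dotProduct_sub, sub_nonneg] at this
    exact this
  have hxy : x ⬝ᵥ y = v ⬝ᵥ (C₁ *ᵥ y) := by
    have hx : x = z + C₁ *ᵥ v := by rw [hz]; ring
    rw [hx, add_dotProduct, hzy, zero_add, dot_symm C₁ hC₁s]
  have hquad : (y - v) ⬝ᵥ (C₁ *ᵥ (y - v)) =
      y ⬝ᵥ (C₁ *ᵥ y) - 2 * (v ⬝ᵥ (C₁ *ᵥ y)) + v ⬝ᵥ (C₁ *ᵥ v) := by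
    have hsym : v ⬝ᵥ (C₁ *ᵥ y) = y ⬝ᵥ (C₁ *ᵥ v) := by
      rw [← dot_symm C₁ hC₁s, dotProduct_comm]
    rw [mulVec_sub, dotProduct_sub, sub_dotProduct, sub_dotProduct, hsym]
    ring
  have hpos : 0 ≤ (y - v) ⬝ᵥ (C₁ *ᵥ (y - v)) := by
    have := hC₁.dotProduct_mulVec_nonneg (y - v)
    simpa using this
  have e1 : x ⬝ᵥ (P₂ *ᵥ x) = 2 * (x ⬝ᵥ y) - y ⬝ᵥ (C₂ *ᵥ y) := by
    have hxy2 : x ⬝ᵥ (P₂ *ᵥ x) = x ⬝ᵥ y := by rw [hy]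
    rw [← hs2, hxy2]; ring
  have e2 : 2 * (x ⬝ᵥ y) - y ⬝ᵥ (C₁ *ᵥ y) =
      x ⬝ᵥ (P₁ *ᵥ x) - (y - v) ⬝ᵥ (C₁ *ᵥ (y - v)) := by
    rw [hquad, hs1, hxy]; ring
  calc x ⬝ᵥ (P₂ *ᵥ x) = 2 * (x ⬝ᵥ y) - y ⬝ᵥ (C₂ *ᵥ y) := e1
    _ ≤ 2 * (x ⬝ᵥ y) - y ⬝ᵥ (C₁ *ᵥ y) := by linarith
    _ = x ⬝ᵥ (P₁ *ᵥ x) - (y - v) ⬝ᵥ (C₁ *ᵥ (y - v)) := e2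
    _ ≤ x ⬝ᵥ (P₁ *ᵥ x) := by linarith
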